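/- Every Wahl chain is obtained from [4] by finitely many applications of the two operations [e_1,...,e_r] ↦ [e_1+1,e_2,...,e_r,2] and [e_1,...,e_r] ↦ [2,e_1,...,e_{r-1},e_r+1]. Conversely, every sequence obtained from [4] by these operations is a Wahl chain. -/

import Mathlib

/-- The value of a Hirzebruch–Jung continued fraction `[e₁,…,e_r]`,
computed as `e₁ - 1/[e₂,…,e_r]` with `[e_r] = e_r`. -/
def hjVal : List ℤ → ℚ
  | [] => 0
  | [x] => (x : ℚ)
  | x :: y :: xs => (x : ℚ) - (hjVal (y :: xs))⁻¹

/-- `IsHJ m q L` : `L` is the HJ continued fraction expansion of `m/q`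
(all entries at least 2 and value `m/q`). -/
def IsHJ (m q : ℤ) (L : List ℤ) : Prop :=
  (∀ e ∈ L, 2 ≤ e) ∧ hjVal L = (m : ℚ) / (q : ℚ)

/-- `IsWahlChain n a L` : `L` is the Wahl chain of `n²/(na-1)` for coprime `0 < a < n`. -/
def IsWahlChain (n a : ℤ) (L : List ℤ) : Prop :=
  0 < a ∧ a < n ∧ Int.gcd n a = 1 ∧ IsHJ (n ^ 2) (n * a - 1) L

/-- Chains generated from `[4]` by the two Wahl operations
`[e₁,…,e_r] ↦ [e₁+1,e₂,…,e_r,2]` and `[e₁,…,e_r] ↦ [2,e₁,…,e_{r-1},e_r+1]`. -/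
inductive WahlGen : List ℤ → Prop
  | base : WahlGen [4]
  | op1 (e : ℤ) (L : List ℤ) : WahlGen (e :: L) → WahlGen ((e + 1) :: (L ++ [2]))
  | op2 (e : ℤ) (L : List ℤ) : WahlGen (L ++ [e]) → WahlGen (2 :: (L ++ [e + 1]))

/-- matrix (A,B,C,D) = product of [[e,-1],[1,0]] -/
def hjM : List ℤ → ℤ × ℤ × ℤ × ℤ
  | [] => (1, 0, 0, 1)
  | x :: xs =>
    (x * (hjM xs).1 - (hjM xs).2.2.1, x * (hjM xs).2.1 - (hjM xs).2.2.2,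
      (hjM xs).1, (hjM xs).2.1)

lemma hjM_cons (x : ℤ) (xs : List ℤ) : hjM (x :: xs) =
    (x * (hjM xs).1 - (hjM xs).2.2.1, x * (hjM xs).2.1 - (hjM xs).2.2.2,
      (hjM xs).1, (hjM xs).2.1) := rfl

def wTup (n a : ℤ) : ℤ × ℤ × ℤ × ℤ := (n^2, n*a+1-n^2, n*a-1, a^2-n*a+1)

lemma hjM_append (L : List ℤ) (e : ℤ) :
    hjM (L ++ [e]) = ((hjM L).1 * e + (hjM L).2.1, -(hjM L).1,
      (hjM L).2.2.1 * e + (hjM L).2.2.2, -(hjM L).2.2.1) := by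
  induction L with
  | nil => simp [hjM]
  | cons x xs ih => simp [hjM, ih]; constructor <;> ring

lemma hjM_det (L : List ℤ) :
    (hjM L).1 * (hjM L).2.2.2 - (hjM L).2.1 * (hjM L).2.2.1 = 1 := by
  induction L with
  | nil => simp [hjM]
  | cons x xs ih => simp only [hjM]; ring_nf; ring_nf at ih; linarith

def HInv (t : ℤ × ℤ × ℤ × ℤ) : Prop :=
  1 ≤ t.2.2.1 ∧ t.2.2.1 + 1 ≤ t.1 ∧ t.2.2.2 ≤ 0 ∧ t.2.1 + 1 ≤ t.2.2.2 ∧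
    1 ≤ t.1 + t.2.1 ∧ t.2.2.1 + t.2.2.2 ≤ t.1 + t.2.1 ∧ 1 ≤ t.2.2.1 + t.2.2.2

lemma hinv_hjM : ∀ (L : List ℤ), L ≠ [] → (∀ e ∈ L, 2 ≤ e) → HInv (hjM L) := by
  intro L
  induction L with
  | nil => intro h; exact absurd rfl h
  | cons x xs ih =>
    intro _ hent
    have hx : 2 ≤ x := hent x (by simp)
    match xs, ih with
    | [], _ =>
      simp only [hjM, HInv]
      norm_num; omega
    | y :: ys, ih =>
      have hInv := ih (by simp) (fun e he => hent e (by simp [he]))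
      obtain ⟨i1, i2, i3, i4, i5, i6, i7⟩ := hInv
      simp only [hjM, HInv] at *
      refine ⟨by omega, ?_, by omega, ?_, ?_, by nlinarith, by omega⟩
      · nlinarith
      · nlinarith
      · nlinarith

lemma hjVal_eq : ∀ (L : List ℤ), L ≠ [] → (∀ e ∈ L, 2 ≤ e) →
    hjVal L = ((hjM L).1 : ℚ) / ((hjM L).2.2.1 : ℚ) := by
  intro L
  induction L with
  | nil => intro h; exact absurd rfl h
  | cons x xs ih =>
    intro _ hent
    match xs, ih with
    | [], _ => simp [hjVal, hjM]
    | y :: ys, ih =>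
      have hent' : ∀ e ∈ y :: ys, 2 ≤ e := fun e he => hent e (by simp [he])
      have hv := ih (by simp) hent'
      obtain ⟨i1, i2, i3, i4, i5, i6, i7⟩ := hinv_hjM (y :: ys) (by simp) hent'
      have hA : ((hjM (y :: ys)).1 : ℚ) ≠ 0 := by exact_mod_cast (by omega : (hjM (y::ys)).1 ≠ 0)
      have hC : ((hjM (y :: ys)).2.2.1 : ℚ) ≠ 0 := by exact_mod_cast (by omega : (hjM (y::ys)).2.2.1 ≠ 0)
      show (x : ℚ) - (hjVal (y :: ys))⁻¹ = _
      rw [hv, inv_div, hjM_cons x (y :: ys)]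
      dsimp only
      push_cast
      field_simp

lemma hjM_reverse : ∀ (L : List ℤ), hjM L.reverse =
    ((hjM L).1, -(hjM L).2.2.1, -(hjM L).2.1, (hjM L).2.2.2) := by
  intro L
  induction L with
  | nil => simp [hjM]
  | cons x xs ih =>
    rw [List.reverse_cons, hjM_append, ih, hjM_cons]
    dsimp only
    refine Prod.ext ?_ (Prod.ext ?_ (Prod.ext ?_ ?_)) <;> dsimp only <;> ring


lemma wahlGen_reverse {L : List ℤ} (h : WahlGen L) : WahlGen L.reverse := by
  induction h with
  | base => exact WahlGen.base
  | op1 e M _ ih =>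
    have : ((e + 1) :: (M ++ [2])).reverse = 2 :: (M.reverse ++ [e + 1]) := by simp
    rw [this]
    exact WahlGen.op2 e M.reverse (by simpa using ih)
  | op2 e M _ ih =>
    have : (2 :: (M ++ [e + 1])).reverse = (e + 1) :: (M.reverse ++ [2]) := by simp
    rw [this]
    exact WahlGen.op1 e M.reverse (by simpa using ih)

lemma gen_to_tuple {L : List ℤ} (h : WahlGen L) :
    ∃ n a : ℤ, 0 < a ∧ a < n ∧ Int.gcd n a = 1 ∧ (∀ e ∈ L, 2 ≤ e) ∧ L ≠ [] ∧
      hjM L = wTup n a := by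
  induction h with
  | base =>
    exact ⟨2, 1, by norm_num, by norm_num, by norm_num, by norm_num,
      by simp, by norm_num [hjM, wTup]⟩
  | op1 e M _ ih =>
    obtain ⟨n, a, ha, han, hg, hent, -, htup⟩ := ih
    set p := (hjM M).1 with hp
    set q := (hjM M).2.1 with hq
    set r := (hjM M).2.2.1 with hr
    set s := (hjM M).2.2.2 with hs
    rw [hjM_cons] at htup
    simp only [wTup, Prod.mk.injEq] at htup
    obtain ⟨e1, e2, e3, e4⟩ := htup
    refine ⟨n + a, a, ha, by linarith, ?_, ?_, by simp, ?_⟩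
    · rw [← Int.isCoprime_iff_gcd_eq_one] at hg ⊢
      have := hg.add_mul_left_left 1
      simpa using this
    · intro x hx
      rcases List.mem_cons.mp hx with h | h
      · have : 2 ≤ e := hent e (by simp)
        omega
      · rcases List.mem_append.mp h with h | h
        · exact hent x (by simp [h])
        · simp at h; omega
    · rw [hjM_cons, hjM_append]
      simp only [wTup, Prod.mk.injEq, ← hp, ← hq, ← hr, ← hs]
      refine ⟨by linear_combination 2*e1 + e2 + 2*e3 + e4, by linear_combination -e1 - e3,
        by linear_combination 2*e3 + e4, by linear_combination -e3⟩
  | op2 e M _ ih =>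
    obtain ⟨n, a, ha, han, hg, hent, -, htup⟩ := ih
    set p := (hjM M).1 with hp
    set q := (hjM M).2.1 with hq
    set r := (hjM M).2.2.1 with hr
    set s := (hjM M).2.2.2 with hs
    rw [hjM_append] at htup
    simp only [wTup, Prod.mk.injEq, ← hp, ← hq, ← hr, ← hs] at htup
    obtain ⟨e1, e2, e3, e4⟩ := htup
    refine ⟨2*n - a, n, by linarith, by linarith, ?_, ?_, by simp, ?_⟩
    · rw [← Int.isCoprime_iff_gcd_eq_one] at hg ⊢
      have := (hg.symm.add_mul_left_left (-2)).neg_left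
      have h2 : -(a + n * (-2)) = 2*n - a := by ring
      rwa [h2] at this
    · intro x hx
      rcases List.mem_cons.mp hx with h | h
      · omega
      · rcases List.mem_append.mp h with h | h
        · exact hent x (by simp [h])
        · simp at h
          have : 2 ≤ e := hent e (by simp)
          omega
    · rw [hjM_cons, hjM_append]
      simp only [wTup, Prod.mk.injEq, ← hp, ← hq, ← hr, ← hs]
      refine ⟨by linear_combination 2*e1 - 2*e2 - e3 + e4, by linear_combination 2*e2 - e4,
        by linear_combination e1 - e2, by linear_combination e2⟩

lemma step_lemma (n a : ℤ) (L : List ℤ) (ha : 0 < a) (h2a : 2*a < n)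
    (hgcd : Int.gcd n a = 1)
    (hent : ∀ e ∈ L, 2 ≤ e) (htup : hjM L = wTup n a)
    (IH : ∀ m b (M : List ℤ), 0 < b → b < m → m < n → Int.gcd m b = 1 →
       (∀ e ∈ M, 2 ≤ e) → M ≠ [] → hjM M = wTup m b → WahlGen M) :
    WahlGen L := by
  have hn3 : 3 ≤ n := by omega
  have hna : 3 ≤ n * a := by nlinarith
  rcases L with _ | ⟨x, tail⟩
  · exfalso
    simp only [hjM, wTup, Prod.mk.injEq] at htup
    omega
  rcases List.eq_nil_or_concat tail with rfl | ⟨mid, y, rfl⟩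
  · exfalso
    simp only [hjM, wTup, Prod.mk.injEq] at htup
    omega
  simp only [List.concat_eq_append] at hent htup ⊢
  have hx : 2 ≤ x := hent x (by simp)
  have hy : 2 ≤ y := hent y (by simp)
  have hmid : ∀ e ∈ mid, 2 ≤ e := fun e he => hent e (by simp [he])
  have Itail := hinv_hjM (mid ++ [y]) (by simp)
    (fun e he => hent e (by simp at he ⊢; tauto))
  rcases hM : hjM mid with ⟨p, q, r, s⟩
  rw [hjM_cons, hjM_append, hM] at htup
  simp only [wTup, Prod.mk.injEq] at htup
  obtain ⟨E1, E2, E3, E4⟩ := htup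
  rw [hjM_append, hM] at Itail
  simp only [HInv] at Itail
  obtain ⟨i1, i2, i3, i4, i5, i6, i7⟩ := Itail
  -- x ≥ 3
  have hx3 : 3 ≤ x := by nlinarith
  rcases eq_or_ne mid [] with rfl | hmne
  · -- mid is empty
    rw [show hjM ([] : List ℤ) = (1,0,0,1) from rfl] at hM
    obtain ⟨hp1, hq1, hr1, hs1⟩ : 1 = p ∧ 0 = q ∧ 0 = r ∧ 1 = s := by
      simpa [Prod.ext_iff] using hM
    subst hp1; subst hq1; subst hr1; subst hs1
    norm_num at E1 E2 E3 E4
    have ha1 : a = 1 := by nlinarith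
    have hn : n = 3 := by nlinarith
    have hy2 : y = 2 := by subst ha1 hn; omega
    have hx5 : x = 5 := by subst ha1 hn; omega
    subst hy2 hx5
    have h0 := WahlGen.op1 4 [] WahlGen.base
    norm_num at h0 ⊢
    exact h0
  · -- mid nonempty
    have Imid := hinv_hjM mid hmne hmid
    rw [hM] at Imid
    simp only [HInv] at Imid
    obtain ⟨j1, j2, j3, j4, j5, j6, j7⟩ := Imid
    have hpv : p = n*a - 1 - a^2 := by linarith
    have hprod : a * (2*a) < a * n := mul_lt_mul_of_pos_left h2a ha
    have hppos : 0 < p := by nlinarith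
    have hy2 : y = 2 := by
      by_contra h
      have h3 : 3 ≤ y := by omega
      have h3p : p * 3 ≤ p * y := mul_le_mul_of_nonneg_left h3 (le_of_lt hppos)
      linarith
    subst hy2
    have hold : hjM ((x - 1) :: mid) = wTup (n - a) a := by
      rw [hjM_cons, hM]
      simp only [wTup, Prod.mk.injEq]
      refine ⟨by linear_combination E4 - E2, by linear_combination E1 + 2*E2 - E3 - 2*E4,
        by linear_combination -E4, by linear_combination E3 + 2*E4⟩
    have hgcd' : Int.gcd (n - a) a = 1 := by
      rw [← Int.isCoprime_iff_gcd_eq_one] at hgcd ⊢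
      have := hgcd.add_mul_left_left (-1)
      have h2 : n + a * (-1) = n - a := by ring
      rwa [h2] at this
    have hgen := IH (n - a) a ((x - 1) :: mid) ha (by omega) (by omega) hgcd'
      (by
        intro e he
        rcases List.mem_cons.mp he with h | h
        · omega
        · exact hmid e h)
      (by simp) hold
    have := WahlGen.op1 (x - 1) mid hgen
    have hxx : x - 1 + 1 = x := by ring
    rwa [hxx] at this

lemma tuple_to_gen : ∀ (N : ℕ) (n a : ℤ) (L : List ℤ), n.toNat ≤ N → 0 < a → a < n →
    Int.gcd n a = 1 → (∀ e ∈ L, 2 ≤ e) → L ≠ [] → hjM L = wTup n a → WahlGen L := by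
  intro N
  induction N with
  | zero =>
    intro n a L hN ha han hgcd hent hne htup
    exfalso; omega
  | succ N ih =>
    intro n a L hN ha han hgcd hent hne htup
    rcases lt_trichotomy (2*a) n with h | h | h
    · exact step_lemma n a L ha h hgcd hent htup
        (fun m b M hb hbm hmn hg he hn ht => ih m b M (by omega) hb hbm hg he hn ht)
    · -- 2a = n forces n = 2, a = 1
      have hd : a ∣ (Int.gcd n a : ℤ) := Int.dvd_coe_gcd ⟨2, by omega⟩ dvd_rfl
      rw [hgcd] at hd
      have ha1 : a = 1 := by
        have := Int.le_of_dvd one_pos hd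
        omega
      have hn2 : n = 2 := by omega
      subst ha1; subst hn2
      rcases L with _ | ⟨x, tail⟩
      · exact absurd rfl hne
      rcases tail with _ | ⟨y, ys⟩
      · have : x = 4 := by
          rw [show hjM [x] = (x, -1, 1, 0) by norm_num [hjM]] at htup
          have := (Prod.ext_iff.mp htup).1
          simpa [wTup] using this
        rw [this]; exact WahlGen.base
      · exfalso
        have hI := hinv_hjM (y :: ys) (by simp) (fun e he => hent e (by simp at he ⊢; tauto))
        obtain ⟨i1, i2, _⟩ := hI
        rw [hjM_cons] at htup
        have h3 : (hjM (y :: ys)).1 = 1 := by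
          have := congrArg (fun t => t.2.2.1) htup
          simpa [wTup] using this
        omega
    · -- 2a > n : use the reversed chain
      have hcop : Int.gcd n (n - a) = 1 := by
        rw [← Int.isCoprime_iff_gcd_eq_one] at hgcd ⊢
        have := (hgcd.add_mul_left_right (-1)).neg_right
        have h2 : -(a + n * (-1)) = n - a := by ring
        rwa [h2] at this
      have key : hjM L.reverse = wTup n (n - a) := by
        rw [hjM_reverse, htup]
        simp only [wTup]
        refine Prod.ext (by ring) (Prod.ext (by dsimp only; ring)
          (Prod.ext (by dsimp only; ring) (by dsimp only; ring)))
      have hgen := step_lemma n (n - a) L.reverse (by omega) (by omega) hcop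
        (fun e he => hent e (List.mem_reverse.mp he)) key
        (fun m b M hb hbm hmn hg he hn ht => ih m b M (by omega) hb hbm hg he hn ht)
      have := wahlGen_reverse hgen
      rwa [List.reverse_reverse] at this

lemma eq_of_dvd_small {c x : ℤ} (hc : 0 < c) (h : c ∣ x) (h1 : -c < x) (h2 : x < c) :
    x = 0 := by
  rcases h with ⟨k, rfl⟩
  rcases lt_trichotomy k 0 with hk | rfl | hk
  · nlinarith
  · ring
  · nlinarith

lemma chain_to_tuple (n a : ℤ) (L : List ℤ) (h : IsWahlChain n a L) :
    L ≠ [] ∧ hjM L = wTup n a := by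
  obtain ⟨ha, han, hgcd, hent, hval⟩ := h
  have hn2 : 2 ≤ n := by omega
  have hC0 : 0 < n * a - 1 := by nlinarith
  have hNQ : ((n ^ 2 : ℤ) : ℚ) ≠ 0 := by
    exact_mod_cast (by positivity : (n ^ 2 : ℤ) ≠ 0)
  have hCQ : ((n * a - 1 : ℤ) : ℚ) ≠ 0 := by
    exact_mod_cast (by omega : (n * a - 1 : ℤ) ≠ 0)
  have hne : L ≠ [] := by
    intro hL
    rw [hL] at hval
    exact (div_ne_zero hNQ hCQ) hval.symm
  refine ⟨hne, ?_⟩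
  have hdet := hjM_det L
  have hIv := hinv_hjM L hne hent
  have hveq := hjVal_eq L hne hent
  rcases hM : hjM L with ⟨A, B, C, D⟩
  rw [hM] at hdet hIv hveq
  simp only [HInv] at hIv
  obtain ⟨i1, i2, i3, i4, i5, i6, i7⟩ := hIv
  dsimp only at hdet hveq
  rw [hval] at hveq
  have hCQ2 : (C : ℚ) ≠ 0 := by exact_mod_cast (by omega : C ≠ 0)
  have cross : A * (n * a - 1) = n ^ 2 * C := by
    have := (div_eq_div_iff hCQ hCQ2).mp hveq
    exact_mod_cast this.symm
  have copAC : IsCoprime A C := ⟨D, -B, by linear_combination hdet⟩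
  have copn : IsCoprime (n ^ 2) (n * a - 1) := ⟨a ^ 2, -(n * a + 1), by ring⟩
  have hAn : A = n ^ 2 := by
    have d1 : A ∣ n ^ 2 := copAC.dvd_of_dvd_mul_right ⟨n * a - 1, by linarith⟩
    have d2 : n ^ 2 ∣ A := copn.dvd_of_dvd_mul_right ⟨C, cross⟩
    exact Int.dvd_antisymm (by omega) (by positivity) d1 d2
  have hCn : C = n * a - 1 := by
    have : A * (n * a - 1) = A * C := by rw [hAn] at cross ⊢; linarith
    exact (mul_left_cancel₀ (by omega : A ≠ 0) this).symm
  have ha2C : a ^ 2 ≤ n * a - 1 := by nlinarith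
  have ha21 : 1 ≤ a ^ 2 := by nlinarith
  have hDd : (n * a - 1) ∣ (D - (a ^ 2 - n * a + 1)) := by
    refine copn.symm.dvd_of_dvd_mul_right ⟨B - (n * a + 1 - n ^ 2), ?_⟩
    rw [hAn, hCn] at hdet
    linear_combination hdet
  have hD : D = a ^ 2 - n * a + 1 := by
    have h0 : D - (a ^ 2 - n * a + 1) = 0 := by
      refine eq_of_dvd_small hC0 hDd (by omega) (by omega)
    omega
  have hB : B = n * a + 1 - n ^ 2 := by
    rw [hAn, hCn, hD] at hdet
    have hne' : (n * a - 1) ≠ 0 := by omega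
    have : (n * a - 1) * (B - (n * a + 1 - n ^ 2)) = 0 := by linear_combination -hdet
    rcases mul_eq_zero.mp this with h | h
    · omega
    · omega
  rw [hAn, hB, hCn, hD]; rfl

/-- A chain is a Wahl chain iff it is generated from `[4]` by the two operations. -/
theorem stmt2 (L : List ℤ) :
    (∃ n a : ℤ, IsWahlChain n a L) ↔ WahlGen L := by
  constructor
  · rintro ⟨n, a, h⟩
    obtain ⟨hne, htup⟩ := chain_to_tuple n a L h
    exact tuple_to_gen n.toNat n a L le_rfl h.1 h.2.1 h.2.2.1 h.2.2.2.1 hne htup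
  · intro h
    obtain ⟨n, a, ha, han, hg, hent, hne, htup⟩ := gen_to_tuple h
    refine ⟨n, a, ha, han, hg, hent, ?_⟩
    rw [hjVal_eq L hne hent, htup]
    norm_num [wTup]
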